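/- Let σ : ℝ → ℝ be the sigmoid function σ(z) = 1/(1 + exp(−z)). Let u_1, …, u_n : ℝ^k → ℝ be twice continuously differentiable logit maps, let y_1, …, y_n ∈ ℝ, set f_i(θ) = σ(u_i(θ)), and define the empirical risk J(θ) = (1/n)·Σ_{i=1}^n −( y_i·log(f_i(θ)) + (1 − y_i)·log(1 − f_i(θ)) ). Then for every θ ∈ ℝ^k and every v ∈ ℝ^k, Hess J(θ)(v, v) ≤ ( (1/n)·Σ_{i=1}^n [ f_i(θ)·(1 − f_i(θ))·‖∇u_i(θ)‖² + |f_i(θ) − y_i|·‖Hess u_i(θ)‖ ] )·‖v‖², where Hess denotes the second-derivative bilinear form, ‖Hess u_i(θ)‖ its operator norm, and the vector norms are Euclidean. -/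

import Mathlib

/-- The sigmoid function `σ(z) = 1 / (1 + exp(−z))`. -/
noncomputable def sigmoid (z : ℝ) : ℝ := 1 / (1 + Real.exp (-z))

lemma denom_pos (z : ℝ) : 0 < 1 + Real.exp (-z) := by positivity

lemma sigmoid_pos (z : ℝ) : 0 < sigmoid z := by
  unfold sigmoid; positivity

lemma sigmoid_lt_one (z : ℝ) : sigmoid z < 1 := by
  unfold sigmoid
  rw [div_lt_one (denom_pos z)]
  linarith [Real.exp_pos (-z)]

lemma one_sub_sigmoid (z : ℝ) :
    1 - sigmoid z = Real.exp (-z) / (1 + Real.exp (-z)) := by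
  unfold sigmoid
  field_simp
  ring

lemma hasDerivAt_denom (z : ℝ) :
    HasDerivAt (fun z => 1 + Real.exp (-z)) (-Real.exp (-z)) z := by
  have h := ((Real.hasDerivAt_exp (-z)).comp z (hasDerivAt_neg z)).const_add 1
  simpa [mul_comm] using h

lemma hasDerivAt_sigmoid (z : ℝ) :
    HasDerivAt sigmoid (sigmoid z * (1 - sigmoid z)) z := by
  have h := (hasDerivAt_denom z).inv (denom_pos z).ne'
  have h2 : HasDerivAt sigmoid (Real.exp (-z) / (1 + Real.exp (-z)) ^ 2) z := by
    show HasDerivAt (fun z => 1 / (1 + Real.exp (-z))) _ z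
    simp only [one_div]
    exact (by simpa using h : HasDerivAt (fun z => 1 + Real.exp (-z))⁻¹ (Real.exp (-z) / (1 + Real.exp (-z)) ^ 2) z)
  convert h2 using 1
  rw [one_sub_sigmoid]
  unfold sigmoid
  field_simp

noncomputable def Lfun (y z : ℝ) : ℝ := Real.log (1 + Real.exp (-z)) + (1 - y) * z

lemma Lfun_eq (y z : ℝ) :
    -(y * Real.log (sigmoid z) + (1 - y) * Real.log (1 - sigmoid z)) = Lfun y z := by
  have h1 : Real.log (sigmoid z) = -Real.log (1 + Real.exp (-z)) := by
    unfold sigmoid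
    rw [one_div, Real.log_inv]
  have h2 : Real.log (1 - sigmoid z) = -z - Real.log (1 + Real.exp (-z)) := by
    rw [one_sub_sigmoid, Real.log_div (Real.exp_ne_zero _) (denom_pos z).ne',
      Real.log_exp]
  rw [h1, h2]; unfold Lfun; ring

lemma hasDerivAt_Lfun (y z : ℝ) :
    HasDerivAt (Lfun y) (sigmoid z - y) z := by
  have hlog := (Real.hasDerivAt_log (denom_pos z).ne').comp z (hasDerivAt_denom z)
  have h := hlog.add ((hasDerivAt_id z).const_mul (1 - y))
  unfold Lfun
  refine h.congr_deriv ?_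
  unfold sigmoid
  have := (denom_pos z).ne'
  field_simp
  ring

lemma contDiff_Lfun (y : ℝ) : ContDiff ℝ 2 (Lfun y) := by
  unfold Lfun
  apply ContDiff.add
  · rw [contDiff_iff_contDiffAt]
    intro z
    exact (Real.contDiffAt_log.mpr (denom_pos z).ne').comp z
      (contDiff_const.add (Real.contDiff_exp.comp contDiff_neg)).contDiffAt
  · exact (contDiff_const.mul contDiff_id)

variable {k : ℕ}

lemma fderiv_comp_Lfun (y : ℝ) (u : EuclideanSpace ℝ (Fin k) → ℝ) (hu : ContDiff ℝ 2 u) :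
    fderiv ℝ (fun x => Lfun y (u x)) = fun x => (sigmoid (u x) - y) • fderiv ℝ u x := by
  funext x
  exact ((hasDerivAt_Lfun y (u x)).comp_hasFDerivAt x
    (hu.differentiable (by simp) x).hasFDerivAt).fderiv

lemma second_deriv_comp (y : ℝ) (u : EuclideanSpace ℝ (Fin k) → ℝ) (hu : ContDiff ℝ 2 u)
    (θ v : EuclideanSpace ℝ (Fin k)) :
    iteratedFDeriv ℝ 2 (fun x => Lfun y (u x)) θ ![v, v]
      = sigmoid (u θ) * (1 - sigmoid (u θ)) * (fderiv ℝ u θ v) ^ 2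
        + (sigmoid (u θ) - y) * (fderiv ℝ (fderiv ℝ u) θ v v) := by
  have hA : HasFDerivAt (fderiv ℝ u) (fderiv ℝ (fderiv ℝ u) θ) θ :=
    (((hu.fderiv_right (m := 1) (by norm_num)).differentiable (by simp)) θ).hasFDerivAt
  have hφ : HasFDerivAt (fun x => sigmoid (u x) - y)
      ((sigmoid (u θ) * (1 - sigmoid (u θ))) • fderiv ℝ u θ) θ :=
    ((hasDerivAt_sigmoid (u θ)).sub_const y).comp_hasFDerivAt θ
      (hu.differentiable (by simp) θ).hasFDerivAt
  have hsmul := hφ.fun_smul hA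
  rw [iteratedFDeriv_two_apply, fderiv_comp_Lfun y u hu, hsmul.fderiv]
  simp [ContinuousLinearMap.smul_apply, ContinuousLinearMap.smulRight_apply, smul_eq_mul]
  ring

lemma sample_bound (y : ℝ) (u : EuclideanSpace ℝ (Fin k) → ℝ) (hu : ContDiff ℝ 2 u)
    (θ v : EuclideanSpace ℝ (Fin k)) :
    iteratedFDeriv ℝ 2 (fun x => Lfun y (u x)) θ ![v, v]
      ≤ (sigmoid (u θ) * (1 - sigmoid (u θ)) * ‖gradient u θ‖ ^ 2
          + |sigmoid (u θ) - y| * ‖iteratedFDeriv ℝ 2 u θ‖) * ‖v‖ ^ 2 := by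
  rw [second_deriv_comp y u hu θ v]
  set σ := sigmoid (u θ)
  have hσ0 : 0 ≤ σ * (1 - σ) := by
    have := sigmoid_pos (u θ); have := sigmoid_lt_one (u θ)
    nlinarith
  have hgrad : ‖gradient u θ‖ = ‖fderiv ℝ u θ‖ := by
    unfold gradient
    exact LinearIsometryEquiv.norm_map _ _
  have h2 : (fderiv ℝ u θ v) ^ 2 ≤ ‖gradient u θ‖ ^ 2 * ‖v‖ ^ 2 := by
    rw [hgrad, ← mul_pow, ← sq_abs]
    apply pow_le_pow_left₀ (abs_nonneg _)
    calc |fderiv ℝ u θ v| = ‖fderiv ℝ u θ v‖ := (Real.norm_eq_abs _).symm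
      _ ≤ ‖fderiv ℝ u θ‖ * ‖v‖ := (fderiv ℝ u θ).le_opNorm v
  have hB : fderiv ℝ (fderiv ℝ u) θ v v = iteratedFDeriv ℝ 2 u θ ![v, v] := by
    rw [iteratedFDeriv_two_apply]
    simp
  have h3 : (σ - y) * (fderiv ℝ (fderiv ℝ u) θ v v)
      ≤ |σ - y| * (‖iteratedFDeriv ℝ 2 u θ‖ * ‖v‖ ^ 2) := by
    calc (σ - y) * (fderiv ℝ (fderiv ℝ u) θ v v)
        ≤ |(σ - y) * (fderiv ℝ (fderiv ℝ u) θ v v)| := le_abs_self _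
      _ = |σ - y| * |fderiv ℝ (fderiv ℝ u) θ v v| := abs_mul _ _
      _ ≤ |σ - y| * (‖iteratedFDeriv ℝ 2 u θ‖ * ‖v‖ ^ 2) := by
          apply mul_le_mul_of_nonneg_left _ (abs_nonneg _)
          rw [hB, ← Real.norm_eq_abs]
          calc ‖iteratedFDeriv ℝ 2 u θ ![v, v]‖
              ≤ ‖iteratedFDeriv ℝ 2 u θ‖ * ∏ i, ‖![v, v] i‖ :=
              (iteratedFDeriv ℝ 2 u θ).le_opNorm _
            _ = ‖iteratedFDeriv ℝ 2 u θ‖ * ‖v‖ ^ 2 := by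
              rw [Fin.prod_univ_two]
              simp [sq]
  have h1 := mul_le_mul_of_nonneg_left h2 hσ0
  nlinarith [h1, h3]

/-- Theorem 2 (group Hessian bound): for a binary classifier `fᵢ = σ ∘ uᵢ`
trained with binary cross-entropy loss on `n` samples, the Hessian quadratic
form of the empirical risk is bounded by the average over the samples of
`fᵢ(1 − fᵢ)‖∇uᵢ‖² + |fᵢ − yᵢ| ‖Hess uᵢ‖`, times `‖v‖²`. -/
theorem hessian_quadForm_empiricalRisk_le {n k : ℕ}
    (u : Fin n → EuclideanSpace ℝ (Fin k) → ℝ) (hu : ∀ i, ContDiff ℝ 2 (u i))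
    (y : Fin n → ℝ)
    (f : Fin n → EuclideanSpace ℝ (Fin k) → ℝ)
    (hf : ∀ i ω, f i ω = sigmoid (u i ω))
    (J : EuclideanSpace ℝ (Fin k) → ℝ)
    (hJ : ∀ ω, J ω = (1 / (n : ℝ)) *
      ∑ i, -(y i * Real.log (f i ω) + (1 - y i) * Real.log (1 - f i ω))) :
    ∀ (θ v : EuclideanSpace ℝ (Fin k)),
      iteratedFDeriv ℝ 2 J θ ![v, v] ≤
        ((1 / (n : ℝ)) * ∑ i, (f i θ * (1 - f i θ) * ‖gradient (u i) θ‖ ^ 2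
          + |f i θ - y i| * ‖iteratedFDeriv ℝ 2 (u i) θ‖)) * ‖v‖ ^ 2 := by
  intro θ v
  have hgc : ∀ i, ContDiff ℝ 2 (fun x => Lfun (y i) (u i x)) :=
    fun i => (contDiff_Lfun (y i)).comp (hu i)
  have hJ2 : J = fun ω => (1 / (n : ℝ)) • ∑ i, Lfun (y i) (u i ω) := by
    funext ω
    rw [hJ ω, smul_eq_mul]
    congr 1
    refine Finset.sum_congr rfl fun i _ => ?_
    rw [hf i ω]
    exact Lfun_eq (y i) (u i ω)
  have hGc : ContDiff ℝ 2 (fun ω => ∑ i, Lfun (y i) (u i ω)) :=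
    ContDiff.sum fun i _ => hgc i
  have key : iteratedFDeriv ℝ 2 J θ ![v, v]
      = (1 / (n : ℝ)) * ∑ i, iteratedFDeriv ℝ 2 (fun x => Lfun (y i) (u i x)) θ ![v, v] := by
    rw [hJ2, iteratedFDeriv_const_smul_apply' hGc.contDiffAt,
      iteratedFDeriv_sum (fun j _ => hgc j)]
    simp
  rw [key]
  calc (1 / (n : ℝ)) * ∑ i, iteratedFDeriv ℝ 2 (fun x => Lfun (y i) (u i x)) θ ![v, v]
      ≤ (1 / (n : ℝ)) * ∑ i, (f i θ * (1 - f i θ) * ‖gradient (u i) θ‖ ^ 2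
          + |f i θ - y i| * ‖iteratedFDeriv ℝ 2 (u i) θ‖) * ‖v‖ ^ 2 := by
        gcongr with i _
        rw [hf i θ]
        exact sample_bound (y i) (u i) (hu i) θ v
    _ = ((1 / (n : ℝ)) * ∑ i, (f i θ * (1 - f i θ) * ‖gradient (u i) θ‖ ^ 2
          + |f i θ - y i| * ‖iteratedFDeriv ℝ 2 (u i) θ‖)) * ‖v‖ ^ 2 := by
        rw [← Finset.sum_mul, mul_assoc]
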